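/- Let n and k be positive integers with 2 ≤ 2k < n. Consider the graph G on vertex set Z_n where two distinct vertices are adjacent if and only if their cyclic distance (the minimum of |u−v| and n−|u−v|) is at most k−1. Then the largest clique in G has exactly k vertices. -/

import Mathlib

/-- Cyclic distance in `ZMod n`: the smaller of the two distances along the cycle. -/
def cdist {n : ℕ} (u v : ZMod n) : ℕ := min (u - v).val (v - u).val

/-- The cyclic interval of length `k` with left end `i` in `ZMod n`. -/
def cInt {n : ℕ} (i : ZMod n) (k : ℕ) : Finset (ZMod n) :=
  (Finset.range k).image (fun j : ℕ => (i + (j : ZMod n) : ZMod n))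

/-- Distance between two cyclic intervals: minimum cyclic distance between elements. -/
noncomputable def iDist {n : ℕ} (I J : Finset (ZMod n)) : ℕ :=
  sInf {d | ∃ u ∈ I, ∃ v ∈ J, d = cdist u v}

lemma val_sub_eq {n : ℕ} [NeZero n] {a b : ℕ} (ha : a < n) (hb : b < n) :
    ((a : ZMod n) - (b : ZMod n)).val = if b ≤ a then a - b else n - (b - a) := by
  split_ifs with h
  · have e : ((a : ZMod n) - (b : ZMod n)) = ((a - b : ℕ) : ZMod n) := by
      rw [Nat.cast_sub h]
    rw [e, ZMod.val_cast_of_lt (by omega)]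
  · have e : ((a : ZMod n) - (b : ZMod n)) = ((n + a - b : ℕ) : ZMod n) := by
      rw [Nat.cast_sub (by omega : b ≤ n + a), Nat.cast_add, ZMod.natCast_self, zero_add]
    rw [e, ZMod.val_cast_of_lt (by omega)]
    omega

lemma base_case (k : ℕ) (hk : 1 ≤ k) (U : Finset (ZMod (2 * k + 1)))
    (hU : ∀ u ∈ U, ∀ v ∈ U, u ≠ v → cdist u v ≤ k - 1) : U.card ≤ k := by
  haveI : NeZero (2 * k + 1) := ⟨by omega⟩
  have hdisj : Disjoint U (U.image (fun u => u + (k : ZMod (2 * k + 1)))) := by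
    rw [Finset.disjoint_left]
    intro x hx hx'
    obtain ⟨u, hu, rfl⟩ := Finset.mem_image.mp hx'
    have hk0 : ((k : ℕ) : ZMod (2 * k + 1)).val = k := ZMod.val_cast_of_lt (by omega)
    have hne : u + (k : ZMod (2 * k + 1)) ≠ u := by
      intro h
      have h2 : ((k : ℕ) : ZMod (2 * k + 1)) = 0 := by
        simpa [add_comm] using congrArg (fun z => z - u) (by simpa [add_comm] using h)
      rw [h2, ZMod.val_zero] at hk0
      omega
    have hle := hU _ hx _ hu hne
    have e1 : (u + (k : ZMod (2 * k + 1)) - u) = ((k : ℕ) : ZMod (2 * k + 1)) := by ring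
    have e2 : (u - (u + (k : ZMod (2 * k + 1)))) = ((k + 1 : ℕ) : ZMod (2 * k + 1)) := by
      have hz : ((2 * k + 1 : ℕ) : ZMod (2 * k + 1)) = 0 := ZMod.natCast_self _
      push_cast at hz ⊢
      linear_combination -hz
    rw [cdist, e1, e2, hk0, ZMod.val_cast_of_lt (by omega)] at hle
    omega
  have himg : (U.image (fun u => u + (k : ZMod (2 * k + 1)))).card = U.card :=
    Finset.card_image_of_injective _ (add_left_injective _)
  have hun : (U ∪ U.image (fun u => u + (k : ZMod (2 * k + 1)))).card = U.card + U.card := by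
    rw [Finset.card_union_of_disjoint hdisj, himg]
  have hle : (U ∪ U.image (fun u => u + (k : ZMod (2 * k + 1)))).card ≤ 2 * k + 1 := by
    have := Finset.card_le_card (Finset.subset_univ
      (U ∪ U.image (fun u => u + (k : ZMod (2 * k + 1)))))
    rwa [Finset.card_univ, ZMod.card] at this
  omega

lemma core (k : ℕ) (hk : 1 ≤ k) :
    ∀ n, 2 * k + 1 ≤ n →
      ∀ U : Finset (ZMod n), (∀ u ∈ U, ∀ v ∈ U, u ≠ v → cdist u v ≤ k - 1) → U.card ≤ k := by
  intro n hn
  induction n, hn using Nat.le_induction with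
  | base => exact base_case k hk
  | succ n hn ih =>
    intro U hU
    by_contra hc
    push_neg at hc
    haveI : NeZero (n + 1) := ⟨Nat.succ_ne_zero n⟩
    haveI : NeZero n := ⟨by omega⟩
    obtain ⟨V, hVU, hV⟩ := Finset.exists_subset_card_eq hc
    have hVclique : ∀ u ∈ V, ∀ v ∈ V, u ≠ v → cdist u v ≤ k - 1 :=
      fun u hu v hv => hU u (hVU hu) v (hVU hv)
    -- find a hole
    have hole : ∃ h : ZMod (n + 1), h ∉ V := by
      by_contra hall
      push_neg at hall
      have hsub : (Finset.univ : Finset (ZMod (n + 1))) ⊆ V := fun x _ => hall x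
      have := Finset.card_le_card hsub
      rw [Finset.card_univ, ZMod.card] at this
      omega
    obtain ⟨h, hh⟩ := hole
    -- translate so the hole is at -1
    set T : Finset (ZMod (n + 1)) := V.image (fun v => v - h - 1) with hT
    have hTcard : T.card = k + 1 := by
      rw [hT, Finset.card_image_of_injective _ (fun a b hab => by
        have : a - h - 1 + (h + 1) = b - h - 1 + (h + 1) := by rw [hab]
        simpa [sub_add_cancel] using (by ring_nf at this; exact this : a = b)), hV]
    have hTclique : ∀ u ∈ T, ∀ v ∈ T, u ≠ v → cdist u v ≤ k - 1 := by
      intro u hu v hv huv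
      obtain ⟨u', hu', rfl⟩ := Finset.mem_image.mp hu
      obtain ⟨v', hv', rfl⟩ := Finset.mem_image.mp hv
      have hne : u' ≠ v' := fun e => huv (by rw [e])
      have := hVclique u' hu' v' hv' hne
      have e1 : (u' - h - 1) - (v' - h - 1) = u' - v' := by ring
      have e2 : (v' - h - 1) - (u' - h - 1) = v' - u' := by ring
      rwa [cdist, e1, e2]
    have hTval : ∀ t ∈ T, t.val < n := by
      intro t ht
      obtain ⟨v, hv, rfl⟩ := Finset.mem_image.mp ht
      have hlt : (v - h - 1).val < n + 1 := ZMod.val_lt _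
      rcases Nat.lt_or_ge (v - h - 1).val n with h1 | h1
      · exact h1
      · exfalso
        have hvn : (v - h - 1).val = n := by omega
        have : v - h - 1 = ((n : ℕ) : ZMod (n + 1)) := by
          have h5 : (((v - h - 1).val : ℕ) : ZMod (n + 1)) = v - h - 1 := by
            rw [ZMod.natCast_val, ZMod.cast_id]
          rw [hvn] at h5
          exact h5.symm
        have hneg : ((n : ℕ) : ZMod (n + 1)) = -1 := by
          have hz : ((n + 1 : ℕ) : ZMod (n + 1)) = 0 := ZMod.natCast_self _
          push_cast at hz ⊢
          linear_combination hz
        rw [hneg] at this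
        have : v = h := by linear_combination this
        exact hh (this ▸ hv)
    -- shrink to ZMod n
    set W : Finset (ZMod n) := T.image (fun t => ((t.val : ℕ) : ZMod n)) with hW
    have hWcard : W.card = k + 1 := by
      rw [hW, Finset.card_image_of_injOn, hTcard]
      intro a ha b hb hab
      have ha' := hTval a (Finset.mem_coe.mp ha)
      have hb' := hTval b (Finset.mem_coe.mp hb)
      have : a.val = b.val := by
        have := congrArg ZMod.val hab
        rwa [ZMod.val_cast_of_lt ha', ZMod.val_cast_of_lt hb'] at this
      have h1 : ((a.val : ℕ) : ZMod (n + 1)) = ((b.val : ℕ) : ZMod (n + 1)) := by rw [this]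
      rwa [ZMod.natCast_val, ZMod.natCast_val, ZMod.cast_id, ZMod.cast_id] at h1
    have hWclique : ∀ u ∈ W, ∀ v ∈ W, u ≠ v → cdist u v ≤ k - 1 := by
      intro u hu v hv huv
      obtain ⟨t1, ht1, rfl⟩ := Finset.mem_image.mp hu
      obtain ⟨t2, ht2, rfl⟩ := Finset.mem_image.mp hv
      have ha : t1.val < n := hTval t1 ht1
      have hb : t2.val < n := hTval t2 ht2
      have hne : t1 ≠ t2 := by
        intro e; exact huv (by rw [e])
      have hcd := hTclique t1 ht1 t2 ht2 hne
      have et1 : t1 = ((t1.val : ℕ) : ZMod (n + 1)) := by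
        rw [ZMod.natCast_val, ZMod.cast_id]
      have et2 : t2 = ((t2.val : ℕ) : ZMod (n + 1)) := by
        rw [ZMod.natCast_val, ZMod.cast_id]
      rw [cdist, et1, et2,
        val_sub_eq (by omega) (by omega), val_sub_eq (by omega) (by omega)] at hcd
      rw [cdist, val_sub_eq ha hb, val_sub_eq hb ha]
      split_ifs at hcd ⊢ <;> omega
    have := ih W hWclique
    omega

theorem stmt0 (n k : ℕ) (hk : 1 ≤ k) (hn : 2 * k < n) :
    (∃ U : Finset (ZMod n), (∀ u ∈ U, ∀ v ∈ U, u ≠ v → cdist u v ≤ k - 1) ∧ U.card = k) ∧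
    (∀ U : Finset (ZMod n), (∀ u ∈ U, ∀ v ∈ U, u ≠ v → cdist u v ≤ k - 1) → U.card ≤ k) := by
  haveI : NeZero n := ⟨by omega⟩
  constructor
  · refine ⟨(Finset.range k).image (fun j : ℕ => (j : ZMod n)), ?_, ?_⟩
    · intro u hu v hv huv
      obtain ⟨i, hi, rfl⟩ := Finset.mem_image.mp hu
      obtain ⟨j, hj, rfl⟩ := Finset.mem_image.mp hv
      rw [Finset.mem_range] at hi hj
      rw [cdist, val_sub_eq (by omega) (by omega), val_sub_eq (by omega) (by omega)]
      have hij : i ≠ j := by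
        intro e; exact huv (by rw [e])
      split_ifs <;> omega
    · rw [Finset.card_image_of_injOn, Finset.card_range]
      intro a ha b hb hab
      have ha' : a < k := by simpa using ha
      have hb' : b < k := by simpa using hb
      have := congrArg ZMod.val hab
      rwa [ZMod.val_cast_of_lt (by omega), ZMod.val_cast_of_lt (by omega)] at this
  · intro U hU
    exact core k hk n (by omega) U hU
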